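/- (Lemma 2.2) Consider z⁺ = F(d,z), z ∈ X ⊆ ℝⁿ, d ∈ D, with z* ∈ X, F locally bounded with bounded image, and suppose: (i) there exist M, σ > 0 and a set Ω ⊆ X such that every solution starting in Ω satisfies |z(t) − z*| ≤ M|z(0) − z*| e^{−σt} for all t ≥ 0 and all disturbance sequences; (ii) there is an integer N ≥ 1 such that for every solution and every t ≥ N there exists i(t) ∈ {0,…,N} with z(t − i(t)) ∈ Ω; (iii) there exist L ≥ 1 and a neighborhood of z* on which |F(d,z) − z*| ≤ L|z − z*| for all d ∈ D. Then z* is robustly globally exponentially stable: there exist M', σ' > 0 such that every solution from any z₀ ∈ X satisfies |z(t) − z*| ≤ M' e^{−σ' t} |z₀ − z*| for all t ≥ 0. -/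

import Mathlib

/-- Lemma 2.2: robust global exponential stability from exponential stability on a
recurrently-visited set Ω, finite-time recurrence, and a local linear bound. -/
theorem stmt_2 {n : ℕ} {D : Type*} [Nonempty D]
    (X : Set (EuclideanSpace ℝ (Fin n))) (hXne : X.Nonempty) (hXcl : IsClosed X)
    (F : D → EuclideanSpace ℝ (Fin n) → EuclideanSpace ℝ (Fin n))
    (hFX : ∀ d : D, ∀ z ∈ X, F d z ∈ X)
    (zs : EuclideanSpace ℝ (Fin n)) (hzs : zs ∈ X)
    -- bounded image
    (R : ℝ) (hR : 0 < R) (hbd : ∀ d : D, ∀ z ∈ X, ‖F d z‖ ≤ R)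
    (Ω : Set (EuclideanSpace ℝ (Fin n))) (hΩ : Ω ⊆ X)
    -- (i) exponential stability from Ω
    (M σ : ℝ) (hM : 0 < M) (hσ : 0 < σ)
    (hi : ∀ (z : ℕ → EuclideanSpace ℝ (Fin n)) (d : ℕ → D),
      z 0 ∈ Ω → (∀ t : ℕ, z (t + 1) = F (d t) (z t)) →
      ∀ t : ℕ, ‖z t - zs‖ ≤ M * ‖z 0 - zs‖ * Real.exp (-σ * t))
    -- (ii) recurrence to Ω
    (N : ℕ) (hN : 1 ≤ N)
    (hii : ∀ (z : ℕ → EuclideanSpace ℝ (Fin n)) (d : ℕ → D),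
      z 0 ∈ X → (∀ t : ℕ, z (t + 1) = F (d t) (z t)) →
      ∀ t : ℕ, N ≤ t → ∃ i ≤ N, z (t - i) ∈ Ω)
    -- (iii) local linear bound near zs
    (L δ : ℝ) (hL : 1 ≤ L) (hδ : 0 < δ)
    (hiii : ∀ d : D, ∀ z ∈ X, ‖z - zs‖ < δ → ‖F d z - zs‖ ≤ L * ‖z - zs‖) :
    ∃ M' σ' : ℝ, 0 < M' ∧ 0 < σ' ∧
      ∀ (z : ℕ → EuclideanSpace ℝ (Fin n)) (d : ℕ → D),
        z 0 ∈ X → (∀ t : ℕ, z (t + 1) = F (d t) (z t)) →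
        ∀ t : ℕ, ‖z t - zs‖ ≤ M' * Real.exp (-σ' * t) * ‖z 0 - zs‖ := by
  have hL0 : (0:ℝ) < L := lt_of_lt_of_le one_pos hL
  have hLN : (1:ℝ) ≤ L ^ N := one_le_pow₀ hL
  have hLNpos : (0:ℝ) < L ^ N := pow_pos hL0 N
  obtain ⟨B, hB⟩ : ∃ B : ℝ, B = R + ‖zs‖ := ⟨_, rfl⟩
  have hBpos : 0 < B := by rw [hB]; positivity
  obtain ⟨C, hCdef⟩ : ∃ C : ℝ, C = L ^ N + B * L ^ N / δ := ⟨_, rfl⟩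
  have hq0 : 0 ≤ B * L ^ N / δ := by positivity
  have hCpos : 0 < C := by rw [hCdef]; positivity
  have hC1 : (1:ℝ) ≤ C := by rw [hCdef]; linarith
  have hCLN : L ^ N ≤ C := by rw [hCdef]; linarith
  refine ⟨(M + 1) * C * Real.exp (σ * N), σ, by positivity, hσ, ?_⟩
  intro z d hz0 hstep
  -- all states in X
  have hmem : ∀ t, z t ∈ X := by
    intro t
    induction t with
    | zero => exact hz0
    | succ t ih => rw [hstep t]; exact hFX _ _ ih
  -- crude bound for t ≥ 1
  have hball : ∀ t : ℕ, 1 ≤ t → ‖z t - zs‖ ≤ B := by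
    intro t ht
    obtain ⟨s, rfl⟩ := Nat.exists_eq_add_of_le ht
    have hz : z (1 + s) = F (d s) (z s) := by rw [Nat.add_comm]; exact hstep s
    calc ‖z (1 + s) - zs‖ ≤ ‖z (1 + s)‖ + ‖zs‖ := norm_sub_le _ _
      _ ≤ B := by
          rw [hz, hB]
          exact add_le_add (hbd _ _ (hmem s)) le_rfl
  -- pre-recurrence bound: for t ≤ N, linear in initial error
  have hpre : ∀ t ≤ N, ‖z t - zs‖ ≤ C * ‖z 0 - zs‖ := by
    intro t htN
    by_cases hsmall : ‖z 0 - zs‖ < δ / L ^ N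
    · have key : ∀ s ≤ N, ‖z s - zs‖ ≤ L ^ s * ‖z 0 - zs‖ := by
        intro s
        induction s with
        | zero => intro _; simp
        | succ s ih =>
          intro hs
          have hsN : s ≤ N := Nat.le_of_succ_le hs
          have ihs := ih hsN
          have hLsN : L ^ s ≤ L ^ N := pow_le_pow_right₀ hL hsN
          have hlt : ‖z s - zs‖ < δ := by
            calc ‖z s - zs‖ ≤ L ^ s * ‖z 0 - zs‖ := ihs
              _ < L ^ s * (δ / L ^ N) :=
                  mul_lt_mul_of_pos_left hsmall (pow_pos hL0 s)
              _ ≤ L ^ N * (δ / L ^ N) :=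
                  mul_le_mul_of_nonneg_right hLsN (by positivity)
              _ = δ := by field_simp
          rw [hstep s]
          calc ‖F (d s) (z s) - zs‖ ≤ L * ‖z s - zs‖ := hiii _ _ (hmem s) hlt
            _ ≤ L * (L ^ s * ‖z 0 - zs‖) :=
                mul_le_mul_of_nonneg_left ihs (le_of_lt hL0)
            _ = L ^ (s + 1) * ‖z 0 - zs‖ := by ring
      calc ‖z t - zs‖ ≤ L ^ t * ‖z 0 - zs‖ := key t htN
        _ ≤ C * ‖z 0 - zs‖ := by
            apply mul_le_mul_of_nonneg_right _ (norm_nonneg _)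
            exact le_trans (pow_le_pow_right₀ hL htN) hCLN
    · push_neg at hsmall
      rcases Nat.eq_zero_or_pos t with rfl | ht1
      · nlinarith [norm_nonneg (z 0 - zs)]
      · have h1 : ‖z t - zs‖ ≤ B := hball t ht1
        have h2 : B ≤ C * ‖z 0 - zs‖ := by
          have h3 : B * L ^ N / δ * (δ / L ^ N) = B := by field_simp
          have hq : B * L ^ N / δ ≤ C := by rw [hCdef]; linarith
          have h4 : B * L ^ N / δ * (δ / L ^ N) ≤ C * ‖z 0 - zs‖ :=
            mul_le_mul hq hsmall (by positivity) hCpos.le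
          linarith
        linarith
  -- find the recurrence time τ ≤ N
  obtain ⟨i, hiN, hOm⟩ := hii z d hz0 hstep N le_rfl
  set τ : ℕ := N - i with hτdef
  have hτN : τ ≤ N := Nat.sub_le _ _
  -- decay after time τ
  have hdecay : ∀ s : ℕ, ‖z (τ + s) - zs‖ ≤ M * ‖z τ - zs‖ * Real.exp (-σ * s) := by
    have h0 : (fun s => z (τ + s)) 0 ∈ Ω := by simpa using hOm
    have hst : ∀ s : ℕ, (fun s => z (τ + s)) (s + 1)
        = F ((fun s => d (τ + s)) s) ((fun s => z (τ + s)) s) := by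
      intro s
      simpa [← Nat.add_assoc] using hstep (τ + s)
    have := hi (fun s => z (τ + s)) (fun s => d (τ + s)) h0 hst
    simpa using this
  intro t
  rcases le_or_gt τ t with hτt | htτ
  · -- t ≥ τ : exponential decay bound
    have hst : τ + (t - τ) = t := Nat.add_sub_cancel' hτt
    have hd := hdecay (t - τ)
    rw [hst] at hd
    have hcast : ((t - τ : ℕ) : ℝ) = (t : ℝ) - (τ : ℝ) := by
      push_cast [Nat.cast_sub hτt]; ring
    rw [hcast] at hd
    have hτmem : ‖z τ - zs‖ ≤ C * ‖z 0 - zs‖ := hpre τ hτN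
    have hexp : Real.exp (-σ * ((t : ℝ) - (τ : ℝ)))
        ≤ Real.exp (σ * N) * Real.exp (-σ * t) := by
      rw [← Real.exp_add]
      apply Real.exp_le_exp.mpr
      have hτNr : (τ : ℝ) ≤ (N : ℝ) := by exact_mod_cast hτN
      nlinarith
    calc ‖z t - zs‖ ≤ M * ‖z τ - zs‖ * Real.exp (-σ * ((t : ℝ) - (τ : ℝ))) := hd
      _ ≤ (M + 1) * (C * ‖z 0 - zs‖) * (Real.exp (σ * N) * Real.exp (-σ * t)) := by
          gcongr <;> linarith
      _ = (M + 1) * C * Real.exp (σ * N) * Real.exp (-σ * t) * ‖z 0 - zs‖ := by ring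
  · -- t < τ ≤ N : pre-recurrence bound
    have htN : t ≤ N := le_trans htτ.le hτN
    have h1 : ‖z t - zs‖ ≤ C * ‖z 0 - zs‖ := hpre t htN
    have hK : (1:ℝ) ≤ (M + 1) * (Real.exp (σ * N) * Real.exp (-σ * t)) := by
      rw [← Real.exp_add]
      have htNr : (t : ℝ) ≤ (N : ℝ) := by exact_mod_cast htN
      have he : (1:ℝ) ≤ Real.exp (σ * N + -σ * t) := Real.one_le_exp (by nlinarith)
      nlinarith [Real.exp_pos (σ * N + -σ * t)]
    calc ‖z t - zs‖ ≤ C * ‖z 0 - zs‖ := h1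
      _ ≤ ((M + 1) * (Real.exp (σ * N) * Real.exp (-σ * t))) * (C * ‖z 0 - zs‖) :=
          le_mul_of_one_le_left (by positivity) hK
      _ = (M + 1) * C * Real.exp (σ * N) * Real.exp (-σ * t) * ‖z 0 - zs‖ := by ring
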